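/- Let Λ < 0, Q ≠ 0 and s ∈ (0,1] satisfy sM² > Q² (so M > 0), and assume Λ₋ < Λ < 0 (note Λ₋ < 0 under these hypotheses). Then P(·,s) has exactly two real roots, both positive, say R < r₀; they satisfy P'(R,s) > 0 and P'(r₀,s) < 0; and P(r,s) < 0 for all r ∈ [0,R) ∪ (r₀,∞). -/

import Mathlib

noncomputable section

/-- The quartic polynomial `P(r,s) = sL/3*r^4 - r^2 + 2sM*r - sQ^2` (case `Q != 0`). -/
def P (M Q Λ s r : ℝ) : ℝ := s * Λ / 3 * r ^ 4 - r ^ 2 + 2 * s * M * r - s * Q ^ 2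

/-- First derivative of `P` with respect to `r`. -/
def P' (M Q Λ s r : ℝ) : ℝ := 4 * s * Λ / 3 * r ^ 3 - 2 * r + 2 * s * M

/-- Second derivative of `P` with respect to `r`. -/
def P'' (M Q Λ s r : ℝ) : ℝ := 4 * s * Λ * r ^ 2 - 2

/-- `Λ₋`, defined for `β := 9sM² − 8Q² ≥ 0`. -/
def Λminus (M Q s : ℝ) : ℝ :=
  1 / (32 * s ^ 2 * Q ^ 6) *
    (8 * Q ^ 4 - (9 * s * M ^ 2 - 8 * Q ^ 2) * (9 * s * M ^ 2 - 8 * Q ^ 2 + 4 * Q ^ 2)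
      - 3 * Real.sqrt (s * M ^ 2 * (9 * s * M ^ 2 - 8 * Q ^ 2) ^ 3))

/-- `Λ₊`, defined for `β := 9sM² − 8Q² ≥ 0`. -/
def Λplus (M Q s : ℝ) : ℝ :=
  1 / (32 * s ^ 2 * Q ^ 6) *
    (8 * Q ^ 4 - (9 * s * M ^ 2 - 8 * Q ^ 2) * (9 * s * M ^ 2 - 8 * Q ^ 2 + 4 * Q ^ 2)
      + 3 * Real.sqrt (s * M ^ 2 * (9 * s * M ^ 2 - 8 * Q ^ 2) ^ 3))

lemma P_hasDerivAt (M Q Λ s r : ℝ) : HasDerivAt (P M Q Λ s) (P' M Q Λ s r) r := by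
  have h := ((((hasDerivAt_pow 4 r).const_mul (s * Λ / 3)).sub (hasDerivAt_pow 2 r)).add
      ((hasDerivAt_id r).const_mul (2 * s * M))).sub_const (s * Q ^ 2)
  simp only [id_eq] at h
  unfold P P'
  exact h.congr_deriv (by push_cast; ring)

lemma P_contOn (M Q Λ s : ℝ) (A : Set ℝ) : ContinuousOn (P M Q Λ s) A := by
  unfold P; fun_prop

set_option maxHeartbeats 1000000 in
/-- Case C₄ (Λ₋ < Λ < 0, Q ≠ 0, sM² > Q², M > 0): exactly two real roots, both positive,
with the stated derivative and sign structure. -/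
theorem root_structure_case_C4 (M Q Λ s : ℝ)
    (hΛ : Λ < 0) (hQ : Q ≠ 0) (hM : 0 < M) (hs0 : 0 < s) (hs1 : s ≤ 1)
    (h : Q ^ 2 < s * M ^ 2) (hlo : Λminus M Q s < Λ) :
    ∃ R r₀ : ℝ, 0 < R ∧ R < r₀ ∧
      P M Q Λ s R = 0 ∧ P M Q Λ s r₀ = 0 ∧
      (∀ r : ℝ, P M Q Λ s r = 0 → r = R ∨ r = r₀) ∧
      0 < P' M Q Λ s R ∧ P' M Q Λ s r₀ < 0 ∧
      (∀ r : ℝ, 0 ≤ r → r < R → P M Q Λ s r < 0) ∧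
      (∀ r : ℝ, r₀ < r → P M Q Λ s r < 0) := by
  have hQ2 : 0 < Q ^ 2 := by positivity
  have hβ0 : 0 < 9 * s * M ^ 2 - 8 * Q ^ 2 := by nlinarith
  obtain ⟨t, htdef⟩ : ∃ t : ℝ, t = Real.sqrt (s * (9 * s * M ^ 2 - 8 * Q ^ 2)) := ⟨_, rfl⟩
  have ht0 : 0 ≤ t := htdef ▸ Real.sqrt_nonneg _
  have ht2 : t ^ 2 = s * (9 * s * M ^ 2 - 8 * Q ^ 2) := by
    rw [htdef]; exact Real.sq_sqrt (by positivity)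
  have htlt : t < 3 * s * M := by
    have hsq : t ^ 2 < (3 * s * M) ^ 2 := by nlinarith [mul_pos hs0 hQ2]
    exact lt_of_pow_lt_pow_left₀ 2 (by positivity) hsq
  obtain ⟨c, hcdef⟩ : ∃ c : ℝ, c = (3 * s * M - t) / 2 := ⟨_, rfl⟩
  have hc0 : 0 < c := by rw [hcdef]; linarith
  -- rewrite the sqrt in Λminus
  have hsqrt : Real.sqrt (s * M ^ 2 * (9 * s * M ^ 2 - 8 * Q ^ 2) ^ 3)
      = M * (9 * s * M ^ 2 - 8 * Q ^ 2) * t := by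
    rw [show s * M ^ 2 * (9 * s * M ^ 2 - 8 * Q ^ 2) ^ 3
        = (M * (9 * s * M ^ 2 - 8 * Q ^ 2)) ^ 2 * (s * (9 * s * M ^ 2 - 8 * Q ^ 2)) by ring,
      Real.sqrt_mul (sq_nonneg _), Real.sqrt_sq (by positivity)]
    rw [htdef]
  have hden : (32 * s ^ 2 * Q ^ 6 : ℝ) ≠ 0 := by positivity
  have hΛm : 32 * s ^ 2 * Q ^ 6 * Λminus M Q s
      = 8 * Q ^ 4 - (9 * s * M ^ 2 - 8 * Q ^ 2) * (9 * s * M ^ 2 - 8 * Q ^ 2 + 4 * Q ^ 2)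
        - 3 * (M * (9 * s * M ^ 2 - 8 * Q ^ 2) * t) := by
    rw [Λminus, hsqrt]; field_simp
  -- key algebraic identity: P(c, Λminus) = 0
  have key : P M Q (Λminus M Q s) s c = 0 := by
    have expand : 96 * s ^ 2 * Q ^ 6 * P M Q (Λminus M Q s) s c
        = s * (32 * s ^ 2 * Q ^ 6 * Λminus M Q s) * c ^ 4
          - 96 * s ^ 2 * Q ^ 6 * (c ^ 2 - 2 * s * M * c + s * Q ^ 2) := by
      unfold P; ring
    have key2 : 96 * s ^ 2 * Q ^ 6 * P M Q (Λminus M Q s) s c = 0 := by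
      rw [expand, hΛm, hcdef]
      linear_combination ((-3/2:ℝ) * Q ^ 4 * s * t ^ 2 + (-12:ℝ) * Q ^ 6 * s ^ 2
        + (3/2:ℝ) * M * Q ^ 2 * s * t ^ 3 + (6:ℝ) * M * Q ^ 4 * s ^ 2 * t
        + (-45/4:ℝ) * M ^ 2 * Q ^ 2 * s ^ 2 * t ^ 2 + (-9/2:ℝ) * M ^ 2 * Q ^ 4 * s ^ 3
        + (-27/16:ℝ) * M ^ 3 * s ^ 2 * t ^ 3 + (27:ℝ) * M ^ 3 * Q ^ 2 * s ^ 3 * t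
        + (243/16:ℝ) * M ^ 4 * s ^ 3 * t ^ 2 + (-81/4:ℝ) * M ^ 4 * Q ^ 2 * s ^ 4
        + (-729/16:ℝ) * M ^ 5 * s ^ 4 * t + (729/16:ℝ) * M ^ 6 * s ^ 5) * ht2
    have h96 : (96 * s ^ 2 * Q ^ 6 : ℝ) ≠ 0 := by positivity
    exact (mul_eq_zero.1 key2).resolve_left h96
  -- hence P(c, Λ) > 0
  have hPc : 0 < P M Q Λ s c := by
    have : P M Q Λ s c = P M Q (Λminus M Q s) s c + s * (Λ - Λminus M Q s) / 3 * c ^ 4 := by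
      unfold P; ring
    rw [this, key, zero_add]
    have : 0 < Λ - Λminus M Q s := by linarith
    positivity
  -- P(0) < 0
  have hP0 : P M Q Λ s 0 < 0 := by
    unfold P
    simp only [ne_eq, OfNat.ofNat_ne_zero, not_false_eq_true, zero_pow, mul_zero, sub_zero,
      zero_sub]
    nlinarith [mul_pos hs0 hQ2]
  -- choose a big X with P X < 0
  obtain ⟨w, hwdef⟩ : ∃ w : ℝ, w = Real.sqrt (6 * M / (-Λ)) := ⟨_, rfl⟩
  have hw0 : 0 ≤ w := hwdef ▸ Real.sqrt_nonneg _
  have hw2 : w ^ 2 = 6 * M / (-Λ) := by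
    rw [hwdef]; exact Real.sq_sqrt (div_nonneg (by linarith) (by linarith))
  obtain ⟨X, hXdef⟩ : ∃ X : ℝ, X = max (c + 1) (1 + w) := ⟨_, rfl⟩
  have hXc : c < X := hXdef ▸ lt_of_lt_of_le (by linarith) (le_max_left _ _)
  have hX1 : 1 ≤ X := hXdef ▸ le_trans (by linarith) (le_max_right _ _)
  have hXw : w < X := hXdef ▸ lt_of_lt_of_le (by linarith) (le_max_right _ _)
  have hX0 : 0 < X := by linarith
  have hA : Λ * X ^ 2 < -6 * M := by
    have h1 : w ^ 2 < X ^ 2 := by nlinarith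
    have h2 : (-Λ) * w ^ 2 = 6 * M := by
      rw [hw2]; field_simp
      rw [div_self hΛ.ne]
    nlinarith [mul_pos (neg_pos.2 hΛ) (sub_pos.2 h1)]
  have hPX : P M Q Λ s X < 0 := by
    have hsx : 0 < s * X ^ 2 := by positivity
    have hB := mul_lt_mul_of_pos_left hA hsx
    unfold P
    nlinarith [hB, mul_nonneg (mul_nonneg (mul_pos hs0 hM).le hX0.le)
      (sub_nonneg.2 hX1), mul_pos hs0 hQ2]
  -- roots by IVT
  obtain ⟨R, hRmem, hPR⟩ : ∃ R ∈ Set.Icc (0:ℝ) c, P M Q Λ s R = 0 := by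
    have := intermediate_value_Icc hc0.le (P_contOn M Q Λ s _)
      (Set.mem_Icc.2 ⟨hP0.le, hPc.le⟩)
    obtain ⟨R, hR, hPR⟩ := this
    exact ⟨R, hR, hPR⟩
  obtain ⟨r₀, hr₀mem, hPr₀⟩ : ∃ r₀ ∈ Set.Icc c X, P M Q Λ s r₀ = 0 := by
    have := intermediate_value_Icc' hXc.le (P_contOn M Q Λ s _)
      (Set.mem_Icc.2 ⟨hPX.le, hPc.le⟩)
    obtain ⟨r₀, hr, hPr⟩ := this
    exact ⟨r₀, hr, hPr⟩
  have hR0 : 0 < R := by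
    rcases lt_or_eq_of_le hRmem.1 with h' | h'
    · exact h'
    · exact absurd hPR (by rw [← h']; exact hP0.ne)
  have hRc : R < c := by
    rcases lt_or_eq_of_le hRmem.2 with h' | h'
    · exact h'
    · exact absurd hPR (by rw [h']; exact hPc.ne')
  have hcr₀ : c < r₀ := by
    rcases lt_or_eq_of_le hr₀mem.1 with h' | h'
    · exact h'
    · exact absurd hPr₀ (by rw [← h']; exact hPc.ne')
  -- P' strictly antitone
  have hanti : StrictAnti (P' M Q Λ s) := by
    intro x y hxy
    unfold P'
    have hq : 0 ≤ x ^ 2 + x * y + y ^ 2 := by nlinarith [sq_nonneg (x + y), sq_nonneg x, sq_nonneg y]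
    have h1 : 0 ≤ s * (-Λ) * ((y - x) * (x ^ 2 + x * y + y ^ 2)) :=
      mul_nonneg (mul_nonneg hs0.le (by linarith)) (mul_nonneg (by linarith) hq)
    nlinarith [h1]
  -- MVT helper
  have mvt : ∀ a b : ℝ, a < b → ∃ u ∈ Set.Ioo a b,
      P' M Q Λ s u = (P M Q Λ s b - P M Q Λ s a) / (b - a) := fun a b hab =>
    exists_hasDerivAt_eq_slope _ _ hab (P_contOn M Q Λ s _)
      (fun x _ => P_hasDerivAt M Q Λ s x)
  -- derivative signs
  have hP'R : 0 < P' M Q Λ s R := by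
    obtain ⟨u, hu, hslope⟩ := mvt R c hRc
    have : 0 < P' M Q Λ s u := by
      rw [hslope, hPR, sub_zero]
      exact div_pos hPc (by linarith [hu.1, hu.2])
    exact lt_trans this (hanti hu.1)
  have hP'r₀ : P' M Q Λ s r₀ < 0 := by
    obtain ⟨v, hv, hslope⟩ := mvt c r₀ hcr₀
    have hvneg : P' M Q Λ s v < 0 := by
      rw [hslope, hPr₀, zero_sub]
      exact div_neg_of_neg_of_pos (by linarith) (by linarith [hv.1, hv.2])
    exact lt_trans (hanti hv.2) hvneg
  -- negativity left of R
  have hlowall : ∀ r : ℝ, r < R → P M Q Λ s r < 0 := by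
    intro r hr
    obtain ⟨u, hu, hslope⟩ := mvt r R hr
    have hu' : 0 < P' M Q Λ s u := lt_trans hP'R (hanti hu.2)
    rw [hslope, hPR] at hu'
    have := (div_pos_iff.1 hu')
    rcases this with ⟨hnum, _⟩ | ⟨_, hden'⟩
    · linarith
    · linarith
  -- negativity right of r₀
  have hhigh : ∀ r : ℝ, r₀ < r → P M Q Λ s r < 0 := by
    intro r hr
    obtain ⟨v, hv, hslope⟩ := mvt r₀ r hr
    have hv' : P' M Q Λ s v < 0 := lt_trans (hanti hv.1) hP'r₀
    rw [hslope, hPr₀, sub_zero] at hv'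
    rcases div_neg_iff.1 hv' with ⟨_, hden'⟩ | ⟨hnum, _⟩
    · linarith
    · linarith
  -- no roots strictly between
  have hmid : ∀ r : ℝ, R < r → r < r₀ → P M Q Λ s r ≠ 0 := by
    intro r h1 h2 hzero
    obtain ⟨u, hu, hsu⟩ := mvt R r h1
    obtain ⟨v, hv, hsv⟩ := mvt r r₀ h2
    have hu0 : P' M Q Λ s u = 0 := by rw [hsu, hPR, hzero]; simp
    have hv0 : P' M Q Λ s v = 0 := by rw [hsv, hPr₀, hzero]; simp
    have : P' M Q Λ s v < P' M Q Λ s u := hanti (lt_trans hu.2 hv.1)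
    rw [hu0, hv0] at this
    exact lt_irrefl 0 this
  refine ⟨R, r₀, hR0, lt_trans hRc hcr₀, hPR, hPr₀, ?_, hP'R, hP'r₀,
    fun r _ hrR => hlowall r hrR, hhigh⟩
  intro r hroot
  by_contra hcon
  push_neg at hcon
  obtain ⟨hne1, hne2⟩ := hcon
  rcases lt_trichotomy r R with h' | h' | h'
  · exact absurd hroot (hlowall r h').ne
  · exact hne1 h'
  · rcases lt_trichotomy r r₀ with h'' | h'' | h''
    · exact hmid r h' h'' hroot
    · exact hne2 h''
    · exact absurd hroot (hhigh r h'').ne
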